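/- Let M be a real symmetric 3×3 matrix and let v ∈ ℝ³ be a unit vector with M v = λ v for some λ ∈ ℝ. Let u ∈ ℝ³ be a unit vector and θ ∈ ℝ. Set R̃ := 2 v vᵀ − I₃, R_q := I₃ + sin θ · u^× + (1 − cos θ) · (u^×)², and M_v := M (I₃ − 2 v vᵀ). Then tr((I₃ − R̃) M) − tr((I₃ − R̃ R_q) M) = (1 − cos θ) · uᵀ (tr(M_v) I₃ − M_v) u. -/
import Mathlib


open Matrix

/-- The skew-symmetric matrix `x^×` with `x^× y = x × y`. -/
noncomputable def crossMat (x : Fin 3 → ℝ) : Matrix (Fin 3) (Fin 3) ℝ :=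
  !![0, -x 2, x 1; x 2, 0, -x 0; -x 1, x 0, 0]

/-- The angle-axis rotation `R_a(θ, u) = I + sin θ · u^× + (1 − cos θ) · (u^×)²`. -/
noncomputable def Ra (θ : ℝ) (u : Fin 3 → ℝ) : Matrix (Fin 3) (Fin 3) ℝ :=
  1 + Real.sin θ • crossMat u + (1 - Real.cos θ) • (crossMat u * crossMat u)

set_option maxHeartbeats 2000000 in
/-- For a symmetric `M` with unit eigenvector `v`, setting `R̃ = R_a(π, v) = 2vvᵀ − I`,
`R_q = R_a(θ, u)` and `M_v = M(I − 2vvᵀ)`, one has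
`tr((I − R̃)M) − tr((I − R̃ R_q)M) = (1 − cos θ) · uᵀ(tr(M_v) I − M_v) u`. -/
theorem trace_gap_eq
    (M : Matrix (Fin 3) (Fin 3) ℝ) (hMsym : M.IsSymm)
    (v : Fin 3 → ℝ) (lam : ℝ) (hv : v ⬝ᵥ v = 1) (hev : M.mulVec v = lam • v)
    (u : Fin 3 → ℝ) (hu : u ⬝ᵥ u = 1) (θ : ℝ)
    (Rt Rq Mv : Matrix (Fin 3) (Fin 3) ℝ)
    (hRt : Rt = (2 : ℝ) • vecMulVec v v - 1)
    (hRq : Rq = Ra θ u)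
    (hMv : Mv = M * (1 - (2 : ℝ) • vecMulVec v v)) :
    ((1 - Rt) * M).trace - ((1 - Rt * Rq) * M).trace =
      (1 - Real.cos θ) * (u ⬝ᵥ (Mv.trace • (1 : Matrix (Fin 3) (Fin 3) ℝ) - Mv).mulVec u) := by
  subst hRt hRq hMv
  have e0 := congrFun hev 0
  have e1 := congrFun hev 1
  have e2 := congrFun hev 2
  simp [Matrix.mulVec, dotProduct, Fin.sum_univ_three] at e0 e1 e2
  have ha := congrFun (congrFun hMsym 0) 1
  have hb := congrFun (congrFun hMsym 0) 2
  have hc := congrFun (congrFun hMsym 1) 2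
  simp [Matrix.transpose_apply] at ha hb hc
  simp [Ra, crossMat, Matrix.trace, Matrix.diag, Matrix.mul_apply, Matrix.mulVec,
    dotProduct, vecMulVec, Fin.sum_univ_three, Matrix.one_apply]
  linear_combination (norm := ring_nf)
    2 * Real.sin θ * ((v 1 * u 2 - v 2 * u 1) * e0 + (v 2 * u 0 - v 0 * u 2) * e1 +
      (v 0 * u 1 - v 1 * u 0) * e2) +
    Real.sin θ * u 0 * hc - Real.sin θ * u 1 * hb + Real.sin θ * u 2 * ha
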